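/- Let V be a finite-dimensional vector space over a field F, let A_1,…,A_n, C be subspaces such that V = A_1 ⊕ ⋯ ⊕ A_n and C ∩ (Σ_{i≠k} A_i) = 0 for every k. Let S_1,…,S_m be nonempty subsets of {1,…,n} whose associated n×m 0/1 matrix over F (entry (j,i) is 1 iff j ∈ S_i) has rank m. Set B'' := { i : |S_i| = 1 } and B' := { i : 1 < |S_i| < n }, and for each i ∈ B' let B_i be a subspace of V. Assume: (ii) for every i ∈ B', B_i ⊆ Σ_{j∈S_i} A_j; and (iv) for every i ∈ B', C ⊆ (Σ_{j∉S_i} A_j) + B_i. Then m · dim C ≤ dim( Σ_{i∈B'} B_i + Σ_{i∈B'', S_i={j}} A_j + C' ), where C' := C if some S_i equals {1,…,n} and C' := 0 otherwise. -/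

import Mathlib

open Finset Module

section aux
variable {F V : Type*} [Field F] [AddCommGroup V] [Module F V]

lemma aux_le_sum {ι : Type*} [DecidableEq ι] (f : ι → Submodule F V) (T : Finset ι) {t : ι}
    (ht : t ∈ T) : f t ≤ ∑ j ∈ T, f j := by
  rw [← Finset.sum_erase_add _ _ ht, Submodule.add_eq_sup]
  exact le_sup_right

lemma aux_sum_le {ι : Type*} (f : ι → Submodule F V) (T : Finset ι) {X : Submodule F V}
    (h : ∀ t ∈ T, f t ≤ X) : ∑ j ∈ T, f j ≤ X := by
  classical
  induction T using Finset.induction_on with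
  | empty => simp
  | insert _ _ hnot ih =>
    rw [Finset.sum_insert hnot, Submodule.add_eq_sup]
    exact sup_le (h _ (Finset.mem_insert_self _ _))
      (ih fun t ht => h t (Finset.mem_insert_of_mem ht))

end aux

theorem conditional_ineq_rank_full (F V : Type*) [Field F] [AddCommGroup V]
    [Module F V] [FiniteDimensional F V] (n m : ℕ)
    (A : Fin n → Submodule F V) (hA : DirectSum.IsInternal A)
    (C : Submodule F V) (hC : ∀ k, C ⊓ (∑ i ∈ univ.erase k, A i) = ⊥)
    (S : Fin m → Finset (Fin n)) (hS : ∀ i, (S i).Nonempty)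
    (hrank : (Matrix.of fun (j : Fin n) (i : Fin m) =>
      if j ∈ S i then (1 : F) else 0).rank = m)
    (B : Fin m → Submodule F V)
    (h2 : ∀ i, 1 < (S i).card → (S i).card < n → B i ≤ ∑ j ∈ S i, A j)
    (h4 : ∀ i, 1 < (S i).card → (S i).card < n → C ≤ (∑ j ∈ (S i)ᶜ, A j) + B i) :
    m * Module.finrank F C ≤
      Module.finrank F
        (((∑ i ∈ univ.filter (fun i => 1 < (S i).card ∧ (S i).card < n), B i)
          + (∑ i ∈ univ.filter (fun i => (S i).card = 1), ∑ j ∈ S i, A j)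
          + (if ∃ i, S i = (univ : Finset (Fin n)) then C else ⊥)) : Submodule F V) := by
  classical
  -- the family of projections onto the `A j`
  let p : Fin n → V →ₗ[F] V := fun j =>
    { toFun := fun v =>
        (((LinearEquiv.ofBijective (DirectSum.coeLinearMap A) hA).symm v) j : V)
      map_add' := fun a b => by simp
      map_smul' := fun r a => by simp [DirectSum.smul_apply] }
  have hp_apply : ∀ j v, p j v =
      (((LinearEquiv.ofBijective (DirectSum.coeLinearMap A) hA).symm v) j : V) := fun _ _ => rfl
  have hp_mem : ∀ j v, p j v ∈ A j := fun j v =>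
    (((LinearEquiv.ofBijective (DirectSum.coeLinearMap A) hA).symm v) j).2
  have hp_same : ∀ (j : Fin n) (v : V), v ∈ A j → p j v = v := by
    intro j v hv
    rw [hp_apply, hA.ofBijective_coeLinearMap_of_mem hv]
  have hp_ne : ∀ (j k : Fin n), j ≠ k → ∀ v ∈ A j, p k v = 0 := by
    intro j k hjk v hv
    rw [hp_apply, hA.ofBijective_coeLinearMap_of_mem_ne hjk hv, Submodule.coe_zero]
  have hp_sum : ∀ v : V, ∑ j, p j v = v := by
    intro v
    set e := LinearEquiv.ofBijective (DirectSum.coeLinearMap A) hA with he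
    calc ∑ j, p j v
        = ∑ j, DirectSum.coeLinearMap A (DirectSum.of (fun j => A j) j (e.symm v j)) := by
          refine Finset.sum_congr rfl fun j _ => ?_
          rw [DirectSum.coeLinearMap_of]; rfl
      _ = DirectSum.coeLinearMap A (∑ j, DirectSum.of (fun j => A j) j (e.symm v j)) :=
          (map_sum _ _ _).symm
      _ = v := by rw [DirectSum.sum_univ_of]; exact e.apply_symm_apply v
  have hp_zero : ∀ (T : Finset (Fin n)) (k : Fin n), k ∉ T →
      ∀ v ∈ (∑ t ∈ T, A t), p k v = 0 := by
    intro T k hk v hv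
    have hle : (∑ t ∈ T, A t) ≤ LinearMap.ker (p k) :=
      aux_sum_le _ _ fun t ht x hx =>
        LinearMap.mem_ker.2 (hp_ne t k (by rintro rfl; exact hk ht) x hx)
    exact LinearMap.mem_ker.1 (hle hv)
  have hp_proj : ∀ (T : Finset (Fin n)) (v : V), v ∈ (∑ t ∈ T, A t) →
      ∑ j ∈ T, p j v = v := by
    intro T v hv
    have h1 : ∑ j ∈ T, p j v + ∑ j ∈ Tᶜ, p j v = v := by
      rw [Finset.sum_add_sum_compl]; exact hp_sum v
    have h2 : ∑ j ∈ Tᶜ, p j v = 0 :=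
      Finset.sum_eq_zero fun j hj => hp_zero T j (Finset.mem_compl.1 hj) v hv
    rw [h2, add_zero] at h1; exact h1
  -- injectivity of each projection on C
  have hCinj : ∀ (k : Fin n) (c : V), c ∈ C → p k c = 0 → c = 0 := by
    intro k c hcC hpk
    have hc2 : c ∈ ∑ j ∈ univ.erase k, A j := by
      have hs := hp_sum c
      rw [← Finset.sum_erase_add _ _ (Finset.mem_univ k), hpk, add_zero] at hs
      rw [← hs]
      exact Submodule.sum_mem _ fun j hj => aux_le_sum A _ hj (hp_mem j c)
    have hb : c ∈ C ⊓ (∑ j ∈ univ.erase k, A j) := ⟨hcC, hc2⟩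
    rw [hC k] at hb
    simpa using hb
  -- the target space
  set W : Submodule F V :=
      ((∑ i ∈ univ.filter (fun i => 1 < (S i).card ∧ (S i).card < n), B i)
        + (∑ i ∈ univ.filter (fun i => (S i).card = 1), ∑ j ∈ S i, A j)
        + (if ∃ i, S i = (univ : Finset (Fin n)) then C else ⊥)) with hWdef
  have hB'W : (∑ i ∈ univ.filter (fun i => 1 < (S i).card ∧ (S i).card < n), B i) ≤ W := by
    rw [hWdef, Submodule.add_eq_sup, Submodule.add_eq_sup]
    exact le_sup_of_le_left le_sup_left
  have hmidW : (∑ i ∈ univ.filter (fun i => (S i).card = 1), ∑ j ∈ S i, A j) ≤ W := by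
    rw [hWdef, Submodule.add_eq_sup, Submodule.add_eq_sup]
    exact le_sup_of_le_left le_sup_right
  -- values of the partial projections of C land in W
  have hqW : ∀ (i : Fin m) (c : C), (∑ j ∈ S i, p j ((c : V))) ∈ W := by
    intro i c
    have hcard1 : 1 ≤ (S i).card := (hS i).card_pos
    have hcardn : (S i).card ≤ n := by simpa using (S i).card_le_univ
    by_cases hc1 : (S i).card = 1
    · have h1 : (∑ j ∈ S i, p j ((c : V))) ∈ ∑ j ∈ S i, A j :=
        Submodule.sum_mem _ fun j hj => aux_le_sum A _ hj (hp_mem j _)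
      have h2 : (∑ j ∈ S i, A j) ≤ W :=
        le_trans (aux_le_sum (fun i => ∑ j ∈ S i, A j) _
          (Finset.mem_filter.2 ⟨Finset.mem_univ i, hc1⟩)) hmidW
      exact h2 h1
    · by_cases hcn : (S i).card < n
      · have hlt : 1 < (S i).card := lt_of_le_of_ne hcard1 (Ne.symm hc1)
        have hc := h4 i hlt hcn c.2
        rw [Submodule.add_eq_sup, Submodule.mem_sup] at hc
        obtain ⟨x, hx, b, hb, hxb⟩ := hc
        have hbB : b ∈ ∑ j ∈ S i, A j := h2 i hlt hcn hb
        have hval : ∑ j ∈ S i, p j ((c : V)) = b := by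
          rw [← hxb]
          have : ∀ j ∈ S i, p j (x + b) = p j b := by
            intro j hj
            rw [map_add, hp_zero ((S i)ᶜ) j (by simp [hj]) x hx, zero_add]
          rw [Finset.sum_congr rfl this, hp_proj (S i) b hbB]
        rw [hval]
        exact hB'W (aux_le_sum B _ (Finset.mem_filter.2 ⟨Finset.mem_univ i, hlt, hcn⟩) hb)
      · have hSn : S i = (univ : Finset (Fin n)) :=
          Finset.eq_univ_of_card _ (by
            have : (S i).card = n := le_antisymm hcardn (not_lt.1 hcn)
            simpa using this)
        have hval : ∑ j ∈ S i, p j ((c : V)) = (c : V) := by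
          rw [hSn]; exact hp_sum _
        rw [hval, hWdef]
        have : (if ∃ i, S i = (univ : Finset (Fin n)) then C else ⊥) = C :=
          if_pos ⟨i, hSn⟩
        rw [Submodule.add_eq_sup]
        exact le_sup_of_le_right (le_of_eq this.symm) c.2
  -- the big linear map
  let q : Fin m → C →ₗ[F] V := fun i => (∑ j ∈ S i, p j) ∘ₗ C.subtype
  let Φ : (Fin m → C) →ₗ[F] V := ∑ i, (q i) ∘ₗ (LinearMap.proj i)
  have hΦ : ∀ c : Fin m → C, Φ c = ∑ i, ∑ j ∈ S i, p j ((c i : V)) := by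
    intro c
    simp [Φ, q, LinearMap.sum_apply]
  have hΦinj : Function.Injective Φ := by
    rw [← LinearMap.ker_eq_bot, Submodule.eq_bot_iff]
    intro c hc
    rw [LinearMap.mem_ker, hΦ] at hc
    have hd : ∀ k : Fin n, (∑ i, if k ∈ S i then c i else (0 : C)) = 0 := by
      intro k
      have h0 : p k (∑ i, ∑ j ∈ S i, p j ((c i : V))) = 0 := by rw [hc, map_zero]
      have hcomp : p k (∑ i, ∑ j ∈ S i, p j ((c i : V)))
          = ∑ i, (if k ∈ S i then p k ((c i : V)) else 0) := by
        rw [map_sum]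
        refine Finset.sum_congr rfl fun i _ => ?_
        rw [map_sum]
        by_cases hk : k ∈ S i
        · rw [if_pos hk]
          rw [Finset.sum_eq_single_of_mem k hk
            (fun j hj hjk => hp_ne j k hjk _ (hp_mem j _))]
          rw [hp_same k _ (hp_mem k _)]
        · rw [if_neg hk]
          exact Finset.sum_eq_zero fun j hj =>
            hp_ne j k (by rintro rfl; exact hk hj) _ (hp_mem j _)
      have hcoe : ∑ i, (if k ∈ S i then p k ((c i : V)) else 0)
          = p k (((∑ i, if k ∈ S i then c i else (0 : C)) : C) : V) := by
        have h1 : (((∑ i, if k ∈ S i then c i else (0 : C)) : C) : V)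
            = ∑ i, (if k ∈ S i then ((c i : V)) else 0) := by
          push_cast
          exact Finset.sum_congr rfl fun i _ => by split <;> simp
        rw [h1, map_sum]
        exact Finset.sum_congr rfl fun i _ => by split <;> simp
      rw [hcomp, hcoe] at h0
      have := hCinj k _ (Submodule.coe_mem _) h0
      exact Subtype.ext (by simpa using this)
    funext i
    have hφ : ∀ φ : Module.Dual F C, φ (c i) = 0 := by
      intro φ
      set M : Matrix (Fin n) (Fin m) F :=
        Matrix.of fun (j : Fin n) (i : Fin m) => if j ∈ S i then (1 : F) else 0 with hM
      set w : Fin m → F := fun i => φ (c i) with hw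
      have hker : M.mulVecLin w = 0 := by
        funext k
        have hdk := congrArg φ (hd k)
        rw [map_sum, map_zero] at hdk
        have : ∀ i ∈ (univ : Finset (Fin m)),
            φ (if k ∈ S i then c i else 0) = M k i * w i := by
          intro i _
          by_cases hk : k ∈ S i <;> simp [hM, hk, hw]
        rw [Finset.sum_congr rfl this] at hdk
        simpa [Matrix.mulVecLin_apply, Matrix.mulVec, dotProduct] using hdk
      have hkerbot : LinearMap.ker M.mulVecLin = ⊥ := by
        have h1 := LinearMap.finrank_range_add_finrank_ker M.mulVecLin
        have h2 : finrank F (LinearMap.range M.mulVecLin) = m := hrank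
        have h3 : finrank F (Fin m → F) = m := by
          rw [Module.finrank_pi]; simp
        rw [h2, h3] at h1
        have h4 : finrank F (LinearMap.ker M.mulVecLin) = 0 := by omega
        exact Submodule.finrank_eq_zero.1 h4
      have hw0 : w = 0 := by
        have : w ∈ LinearMap.ker M.mulVecLin := LinearMap.mem_ker.2 hker
        rwa [hkerbot, Submodule.mem_bot] at this
      have := congrFun hw0 i
      simpa [hw] using this
    exact (Module.forall_dual_apply_eq_zero_iff F (c i)).1 hφ
  have hrange : ∀ c : Fin m → C, Φ c ∈ W := by
    intro c
    rw [hΦ]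
    exact Submodule.sum_mem _ fun i _ => hqW i (c i)
  let Φ' : (Fin m → C) →ₗ[F] W := LinearMap.codRestrict W Φ hrange
  have hΦ'inj : Function.Injective Φ' := by
    rw [← LinearMap.ker_eq_bot, LinearMap.ker_codRestrict]
    rw [LinearMap.ker_eq_bot]
    exact hΦinj
  have hfr : finrank F (Fin m → C) = m * finrank F C := by
    rw [Module.finrank_pi_fintype F]
    simp [Finset.sum_const, mul_comm]
  calc m * finrank F C = finrank F (Fin m → C) := hfr.symm
    _ ≤ finrank F W := LinearMap.finrank_le_finrank_of_injective hΦ'inj
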